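/- Suppose inner-product invariance holds for (X^e, Y^e), e ∈ E, under β^0 ∈ R^p, i.e., E[X^e_k (Y^e − X^e β^0)] is the same for all environments e and each coordinate k. Let ζ^e_1, …, ζ^e_p, ζ^e_y be centered random variables, jointly independent and independent of (X^e, Y^e), with finite variance, such that E[(ζ^e_k)^2] = E[(ζ^f_k)^2] for all e, f ∈ E and k = 1,…,p. Define the observed variables X̃^e_k = X^e_k + ζ^e_k and Ỹ^e = Y^e + ζ^e_y. Then inner-product invariance also holds for (X̃^e, Ỹ^e), e ∈ E, under the same β^0. -/

import Mathlib

open MeasureTheory ProbabilityTheory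
open scoped ENNReal

/-- Index type for the joint-independence assumption of the errors-in-variables model:
`none` indexes the pair `(X, Y)` and `some i` indexes the measurement errors
`ζ_1, …, ζ_p` (for `i < p`) and `ζ_y` (for `i = p`). -/
def EIVType (p : ℕ) : Option (Fin (p + 1)) → Type
  | none => (Fin p → ℝ) × ℝ
  | some _ => ℝ

instance (p : ℕ) : ∀ i, MeasurableSpace (EIVType p i)
  | none => inferInstanceAs (MeasurableSpace ((Fin p → ℝ) × ℝ))
  | some _ => inferInstanceAs (MeasurableSpace ℝ)

/-- The family `((X, Y), ζ_1, …, ζ_p, ζ_y)` of random elements whose joint independence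
is assumed in the errors-in-variables model. -/
def EIVFam {Ω : Type*} {p : ℕ} (X : Ω → Fin p → ℝ) (Y : Ω → ℝ)
    (ζ : Ω → Fin p → ℝ) (ζy : Ω → ℝ) : ∀ i : Option (Fin (p + 1)), Ω → EIVType p i
  | none => fun ω => (X ω, Y ω)
  | some i => Fin.lastCases (fun ω => ζy ω) (fun k ω => ζ ω k) i

section Aux

variable {Ω : Type*} [MeasurableSpace Ω] {μ : Measure Ω} [IsProbabilityMeasure μ] {p : ℕ}

lemma eiv_mul_integrable {f g : Ω → ℝ} (hf : MemLp f 2 μ) (hg : MemLp g 2 μ) :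
    Integrable (fun ω => f ω * g ω) μ := by
  have h : (1 : ℝ≥0∞) / 1 = 1 / 2 + 1 / 2 := by
    rw [ENNReal.div_add_div_same, one_div_one, one_add_one_eq_two,
      ENNReal.div_self two_ne_zero ENNReal.ofNat_ne_top]
  have := (hg.smul hf : MemLp (f • g) 1 μ)
  rw [memLp_one_iff_integrable] at this
  simpa [Pi.smul_apply, smul_eq_mul, Pi.mul_def] using this

lemma eiv_indep_integral_mul {f g : Ω → ℝ} (h : IndepFun f g μ)
    (hf : MemLp f 2 μ) (hg : MemLp g 2 μ) :
    ∫ ω, f ω * g ω ∂μ = (∫ ω, f ω ∂μ) * ∫ ω, g ω ∂μ :=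
  h.integral_fun_mul_eq_mul_integral hf.1 hg.1

lemma eivFam_castSucc (X : Ω → Fin p → ℝ) (Y : Ω → ℝ) (ζ : Ω → Fin p → ℝ) (ζy : Ω → ℝ)
    (j : Fin p) : EIVFam X Y ζ ζy (some j.castSucc) = fun ω => ζ ω j :=
  Fin.lastCases_castSucc (motive := fun x => Ω → EIVType p (some x)) (last := fun ω => ζy ω)
    (cast := fun k ω => ζ ω k) j

lemma eivFam_last (X : Ω → Fin p → ℝ) (Y : Ω → ℝ) (ζ : Ω → Fin p → ℝ) (ζy : Ω → ℝ) :
    EIVFam X Y ζ ζy (some (Fin.last p)) = fun ω => ζy ω :=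
  Fin.lastCases_last (motive := fun x => Ω → EIVType p (some x)) (last := fun ω => ζy ω)
    (cast := fun k ω => ζ ω k)

lemma eiv_key (X : Ω → Fin p → ℝ) (Y : Ω → ℝ) (ζ : Ω → Fin p → ℝ) (ζy : Ω → ℝ)
    (β0 : Fin p → ℝ)
    (hζcent : ∀ k, ∫ ω, ζ ω k ∂μ = 0) (hζycent : ∫ ω, ζy ω ∂μ = 0)
    (hindep : iIndepFun (EIVFam X Y ζ ζy) μ)
    (hL2X : ∀ k, MemLp (fun ω => X ω k) 2 μ) (hL2Y : MemLp Y 2 μ)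
    (hL2ζ : ∀ k, MemLp (fun ω => ζ ω k) 2 μ) (hL2ζy : MemLp ζy 2 μ) (k : Fin p) :
    ∫ ω, (X ω k + ζ ω k) * ((Y ω + ζy ω) - ∑ j, (X ω j + ζ ω j) * β0 j) ∂μ
      = ∫ ω, X ω k * (Y ω - ∑ j, X ω j * β0 j) ∂μ - β0 k * ∫ ω, (ζ ω k) ^ 2 ∂μ := by
  -- independence facts
  have hpair : ∀ i : Fin (p + 1),
      IndepFun (fun ω => (X ω, Y ω)) (EIVFam X Y ζ ζy (some i)) μ :=
    fun i => hindep.indepFun (i := none) (j := some i) (by simp)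
  have hXζ : ∀ k' j : Fin p, IndepFun (fun ω => X ω k') (fun ω => ζ ω j) μ := by
    intro k' j
    have h := (hpair (Fin.castSucc j)).comp
      (φ := fun v : (Fin p → ℝ) × ℝ => v.1 k') (ψ := id)
      (by fun_prop) measurable_id
    rw [eivFam_castSucc] at h
    exact h
  have hYζ : ∀ j : Fin p, IndepFun Y (fun ω => ζ ω j) μ := by
    intro j
    have h := (hpair (Fin.castSucc j)).comp
      (φ := fun v : (Fin p → ℝ) × ℝ => v.2) (ψ := id) measurable_snd measurable_id
    rw [eivFam_castSucc] at h
    exact h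
  have hXζy : ∀ k' : Fin p, IndepFun (fun ω => X ω k') ζy μ := by
    intro k'
    have h := (hpair (Fin.last p)).comp
      (φ := fun v : (Fin p → ℝ) × ℝ => v.1 k') (ψ := id)
      (by fun_prop) measurable_id
    rw [eivFam_last] at h
    exact h
  have hζζy : ∀ k' : Fin p, IndepFun (fun ω => ζ ω k') ζy μ := by
    intro k'
    have hne : (some (Fin.castSucc k') : Option (Fin (p + 1))) ≠ some (Fin.last p) := by
      simpa using (Fin.castSucc_lt_last k').ne
    have h := hindep.indepFun (i := some (Fin.castSucc k')) (j := some (Fin.last p)) hne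
    rw [eivFam_castSucc, eivFam_last] at h
    exact h
  have hζζ : ∀ k' j : Fin p, k' ≠ j → IndepFun (fun ω => ζ ω k') (fun ω => ζ ω j) μ := by
    intro k' j hkj
    have hne : (some (Fin.castSucc k') : Option (Fin (p + 1))) ≠ some (Fin.castSucc j) := by
      simpa [Fin.castSucc_inj] using hkj
    have h := hindep.indepFun (i := some (Fin.castSucc k')) (j := some (Fin.castSucc j)) hne
    rw [eivFam_castSucc, eivFam_castSucc] at h
    exact h
  -- L2 facts
  have hS1 : MemLp (fun ω => ∑ j, X ω j * β0 j) 2 μ := by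
    apply memLp_finset_sum
    intro j _
    simpa [mul_comm] using (hL2X j).const_mul (β0 j)
  have hS2 : MemLp (fun ω => ∑ j, ζ ω j * β0 j) 2 μ := by
    apply memLp_finset_sum
    intro j _
    simpa [mul_comm] using (hL2ζ j).const_mul (β0 j)
  have hYS : MemLp (fun ω => Y ω - ∑ j, X ω j * β0 j) 2 μ := hL2Y.sub hS1
  -- rewrite integrand
  have hrw : (fun ω => (X ω k + ζ ω k) * ((Y ω + ζy ω) - ∑ j, (X ω j + ζ ω j) * β0 j))
      = fun ω => X ω k * (Y ω - ∑ j, X ω j * β0 j)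
        + (X ω k * ζy ω + ζ ω k * Y ω + ζ ω k * ζy ω)
        - (X ω k * (∑ j, ζ ω j * β0 j) + ζ ω k * (∑ j, X ω j * β0 j)
            + ζ ω k * (∑ j, ζ ω j * β0 j)) := by
    funext ω
    have hsum : (∑ j, (X ω j + ζ ω j) * β0 j)
        = (∑ j, X ω j * β0 j) + ∑ j, ζ ω j * β0 j := by
      rw [← Finset.sum_add_distrib]
      exact Finset.sum_congr rfl fun j _ => by ring
    rw [hsum]; ring
  rw [hrw]
  -- integrability
  have IA : Integrable (fun ω => X ω k * (Y ω - ∑ j, X ω j * β0 j)) μ :=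
    eiv_mul_integrable (hL2X k) hYS
  have IB1 := eiv_mul_integrable (hL2X k) hL2ζy
  have IB2 := eiv_mul_integrable (hL2ζ k) hL2Y
  have IB3 := eiv_mul_integrable (hL2ζ k) hL2ζy
  have IC1 := eiv_mul_integrable (hL2X k) hS2
  have IC2 := eiv_mul_integrable (hL2ζ k) hS1
  have IC3 := eiv_mul_integrable (hL2ζ k) hS2
  have IB12 : Integrable (fun ω => X ω k * ζy ω + ζ ω k * Y ω) μ := IB1.add IB2
  have IB : Integrable (fun ω => X ω k * ζy ω + ζ ω k * Y ω + ζ ω k * ζy ω) μ :=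
    IB12.add IB3
  have IC12 : Integrable (fun ω => X ω k * (∑ j, ζ ω j * β0 j)
      + ζ ω k * (∑ j, X ω j * β0 j)) μ := IC1.add IC2
  have IC : Integrable (fun ω => X ω k * (∑ j, ζ ω j * β0 j)
      + ζ ω k * (∑ j, X ω j * β0 j) + ζ ω k * (∑ j, ζ ω j * β0 j)) μ :=
    IC12.add IC3
  have IAB : Integrable (fun ω => X ω k * (Y ω - ∑ j, X ω j * β0 j)
      + (X ω k * ζy ω + ζ ω k * Y ω + ζ ω k * ζy ω)) μ := IA.add IB
  rw [integral_sub IAB IC, integral_add IA IB, integral_add IB12 IB3,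
    integral_add IB1 IB2, integral_add IC12 IC3, integral_add IC1 IC2]
  -- cross terms vanish
  have z1 : ∫ ω, X ω k * ζy ω ∂μ = 0 := by
    rw [eiv_indep_integral_mul (hXζy k) (hL2X k) hL2ζy, hζycent, mul_zero]
  have z2 : ∫ ω, ζ ω k * Y ω ∂μ = 0 := by
    rw [eiv_indep_integral_mul ((hYζ k).symm) (hL2ζ k) hL2Y, hζcent, zero_mul]
  have z3 : ∫ ω, ζ ω k * ζy ω ∂μ = 0 := by
    rw [eiv_indep_integral_mul (hζζy k) (hL2ζ k) hL2ζy, hζcent, zero_mul]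
  have z4 : ∫ ω, X ω k * (∑ j, ζ ω j * β0 j) ∂μ = 0 := by
    have : (fun ω => X ω k * ∑ j, ζ ω j * β0 j)
        = fun ω => ∑ j, (X ω k * ζ ω j) * β0 j := by
      funext ω; rw [Finset.mul_sum]; exact Finset.sum_congr rfl fun j _ => by ring
    rw [this, integral_finset_sum _ fun j _ =>
      (eiv_mul_integrable (hL2X k) (hL2ζ j)).mul_const (β0 j)]
    refine Finset.sum_eq_zero fun j _ => ?_
    rw [integral_mul_const, eiv_indep_integral_mul (hXζ k j) (hL2X k) (hL2ζ j)]
    simp [hζcent]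
  have z5 : ∫ ω, ζ ω k * (∑ j, X ω j * β0 j) ∂μ = 0 := by
    have : (fun ω => ζ ω k * ∑ j, X ω j * β0 j)
        = fun ω => ∑ j, (ζ ω k * X ω j) * β0 j := by
      funext ω; rw [Finset.mul_sum]; exact Finset.sum_congr rfl fun j _ => by ring
    rw [this, integral_finset_sum _ fun j _ =>
      (eiv_mul_integrable (hL2ζ k) (hL2X j)).mul_const (β0 j)]
    refine Finset.sum_eq_zero fun j _ => ?_
    rw [integral_mul_const, eiv_indep_integral_mul ((hXζ j k).symm) (hL2ζ k) (hL2X j)]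
    simp [hζcent]
  have z6 : ∫ ω, ζ ω k * (∑ j, ζ ω j * β0 j) ∂μ = β0 k * ∫ ω, (ζ ω k) ^ 2 ∂μ := by
    have : (fun ω => ζ ω k * ∑ j, ζ ω j * β0 j)
        = fun ω => ∑ j, (ζ ω k * ζ ω j) * β0 j := by
      funext ω; rw [Finset.mul_sum]; exact Finset.sum_congr rfl fun j _ => by ring
    rw [this, integral_finset_sum _ fun j _ =>
      (eiv_mul_integrable (hL2ζ k) (hL2ζ j)).mul_const (β0 j)]
    rw [Finset.sum_eq_single k]
    · rw [integral_mul_const]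
      have : (fun ω => ζ ω k * ζ ω k) = fun ω => (ζ ω k) ^ 2 := by funext ω; ring
      rw [this, mul_comm]
    · intro j _ hjk
      rw [integral_mul_const, eiv_indep_integral_mul (hζζ k j (Ne.symm hjk)) (hL2ζ k) (hL2ζ j)]
      simp [hζcent]
    · intro h; exact absurd (Finset.mem_univ k) h
  rw [z1, z2, z3, z4, z5, z6]
  ring

end Aux

/-- Errors-in-variables: if inner-product invariance holds for the latent variables
`(X^e, Y^e)` under `β⁰`, and the measurement errors `ζ^e_1, …, ζ^e_p, ζ^e_y` are
centered, jointly independent and independent of `(X^e, Y^e)`, with second moments of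
`ζ^e_k` constant across environments, then inner-product invariance also holds for the
observed variables `X̃^e = X^e + ζ^e`, `Ỹ^e = Y^e + ζ^e_y` under the same `β⁰`. -/
theorem errors_in_variables_inner_product_invariance {Ω : Type*} [MeasurableSpace Ω]
    (μ : Measure Ω) [IsProbabilityMeasure μ] {E : Type*} {p : ℕ}
    (X : E → Ω → Fin p → ℝ) (Y : E → Ω → ℝ)
    (ζ : E → Ω → Fin p → ℝ) (ζy : E → Ω → ℝ) (β0 : Fin p → ℝ)
    (hinv : ∀ (e f : E) (k : Fin p),
      ∫ ω, X e ω k * (Y e ω - ∑ j, X e ω j * β0 j) ∂μ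
        = ∫ ω, X f ω k * (Y f ω - ∑ j, X f ω j * β0 j) ∂μ)
    (hζcent : ∀ e k, ∫ ω, ζ e ω k ∂μ = 0)
    (hζycent : ∀ e, ∫ ω, ζy e ω ∂μ = 0)
    (hsecond : ∀ (e f : E) (k : Fin p),
      ∫ ω, (ζ e ω k) ^ 2 ∂μ = ∫ ω, (ζ f ω k) ^ 2 ∂μ)
    (hindep : ∀ e, iIndepFun
      (EIVFam (X e) (Y e) (ζ e) (ζy e)) μ)
    (hL2X : ∀ e k, MemLp (fun ω => X e ω k) 2 μ) (hL2Y : ∀ e, MemLp (Y e) 2 μ)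
    (hL2ζ : ∀ e k, MemLp (fun ω => ζ e ω k) 2 μ) (hL2ζy : ∀ e, MemLp (ζy e) 2 μ) :
    ∀ (e f : E) (k : Fin p),
      ∫ ω, (X e ω k + ζ e ω k) *
          ((Y e ω + ζy e ω) - ∑ j, (X e ω j + ζ e ω j) * β0 j) ∂μ
        = ∫ ω, (X f ω k + ζ f ω k) *
            ((Y f ω + ζy f ω) - ∑ j, (X f ω j + ζ f ω j) * β0 j) ∂μ := by
  intro e f k
  rw [eiv_key (X e) (Y e) (ζ e) (ζy e) β0 (hζcent e) (hζycent e) (hindep e)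
      (hL2X e) (hL2Y e) (hL2ζ e) (hL2ζy e) k,
    eiv_key (X f) (Y f) (ζ f) (ζy f) β0 (hζcent f) (hζycent f) (hindep f)
      (hL2X f) (hL2Y f) (hL2ζ f) (hL2ζy f) k,
    hinv e f k, hsecond e f k]
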